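/- For every natural number m ≥ 1, all vectors a, b ∈ ℝ^m, and every index i ∈ Fin m, the softmax function satisfies |softmax(a)_i − softmax(b)_i| ≤ √m · ‖a − b‖₂, where ‖a − b‖₂ = √(∑_{j} (a_j − b_j)²) is the Euclidean norm. -/

import Mathlib

open scoped BigOperators

/-- The softmax function on `ℝ^m`: `softmax(a)_i = exp(a_i) / ∑_j exp(a_j)`. -/
noncomputable def softmax {m : ℕ} (a : EuclideanSpace ℝ (Fin m)) (i : Fin m) : ℝ :=
  Real.exp (a i) / ∑ j, Real.exp (a j)

lemma softmax_aux_quad {q M : ℝ} (h0 : 0 ≤ q) (h1 : q ≤ 1) (hM : 0 ≤ M) :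
    q * ((1 - q) * (2 * M)) ≤ M := by nlinarith [mul_nonneg hM (sq_nonneg (2*q-1))]

/-- The softmax function is `√m`-Lipschitz in each coordinate with respect to the
Euclidean (ℓ²) norm. -/
theorem softmax_lipschitz {m : ℕ} (hm : 1 ≤ m)
    (a b : EuclideanSpace ℝ (Fin m)) (i : Fin m) :
    |softmax a i - softmax b i| ≤ Real.sqrt m * ‖a - b‖ := by
  set v : Fin m → ℝ := fun j => b j - a j with hv
  set M : ℝ := ‖a - b‖ with hM
  have hM0 : 0 ≤ M := norm_nonneg _
  -- each coordinate is bounded by the Euclidean norm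
  have hcoord : ∀ j, |v j| ≤ M := by
    intro j
    have : |v j| = ‖(a - b) j‖ := by
      simp [hv, Real.norm_eq_abs, abs_sub_comm]
    rw [this, hM, EuclideanSpace.norm_eq]
    rw [show ‖(a - b) j‖ = Real.sqrt (‖(a - b) j‖ ^ 2) by
      rw [Real.sqrt_sq (norm_nonneg _)]]
    apply Real.sqrt_le_sqrt
    exact Finset.single_le_sum (fun k _ => sq_nonneg ‖(a - b) k‖) (Finset.mem_univ j)
  set S : ℝ → ℝ := fun t => ∑ j, Real.exp (a j + t * v j) with hS
  have hSpos : ∀ t, 0 < S t := fun t =>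
    Finset.sum_pos (fun j _ => Real.exp_pos _) ⟨i, Finset.mem_univ i⟩
  set g : ℝ → ℝ := fun t => Real.exp (a i + t * v i) / S t with hg
  set g' : ℝ → ℝ := fun t =>
    (Real.exp (a i + t * v i) * v i * S t -
      Real.exp (a i + t * v i) * ∑ j, Real.exp (a j + t * v j) * v j) / S t ^ 2 with hg'
  have hderiv : ∀ t : ℝ, HasDerivAt g (g' t) t := by
    intro t
    have hN : HasDerivAt (fun t : ℝ => Real.exp (a i + t * v i))
        (Real.exp (a i + t * v i) * v i) t := by
      have h1 : HasDerivAt (fun t : ℝ => a i + t * v i) (v i) t := by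
        simpa using ((hasDerivAt_id t).mul_const (v i)).const_add (a i)
      simpa using h1.exp
    have hS' : HasDerivAt S (∑ j, Real.exp (a j + t * v j) * v j) t := by
      apply HasDerivAt.fun_sum
      intro j _
      have h1 : HasDerivAt (fun t : ℝ => a j + t * v j) (v j) t := by
        simpa using ((hasDerivAt_id t).mul_const (v j)).const_add (a j)
      simpa using h1.exp
    exact hN.div hS' (hSpos t).ne'
  -- bound the derivative
  have hbound : ∀ t : ℝ, |g' t| ≤ M := by
    intro t
    set p : Fin m → ℝ := fun j => Real.exp (a j + t * v j) / S t with hp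
    have hp0 : ∀ j, 0 ≤ p j := fun j => div_nonneg (Real.exp_pos _).le (hSpos t).le
    have hpsum : ∑ j, p j = 1 := by
      rw [hp]
      rw [← Finset.sum_div]
      exact div_self (hSpos t).ne'
    have hpi1 : p i ≤ 1 := by
      rw [← hpsum]
      exact Finset.single_le_sum (fun j _ => hp0 j) (Finset.mem_univ i)
    have hrw : g' t = p i * v i - p i * ∑ j, p j * v j := by
      have hSne : S t ≠ 0 := (hSpos t).ne'
      have h1 : ∀ j, p j * v j = Real.exp (a j + t * v j) * v j / S t := by
        intro j; rw [hp]; exact div_mul_eq_mul_div _ _ _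
      rw [hg', hp, Finset.sum_congr rfl fun j _ => h1 j, ← Finset.sum_div]
      field_simp
    rw [hrw]
    have key : p i * v i - p i * ∑ j, p j * v j = p i * ∑ j, p j * (v i - v j) := by
      have h2 : ∑ j, p j * (v i - v j) = v i - ∑ j, p j * v j := by
        rw [Finset.sum_congr rfl (fun j _ => mul_sub (p j) (v i) (v j)),
          Finset.sum_sub_distrib, ← Finset.sum_mul, hpsum, one_mul]
      rw [h2]; ring
    rw [key]
    have habs : |p i * ∑ j, p j * (v i - v j)| ≤ p i * ∑ j, p j * |v i - v j| := by
      rw [abs_mul, abs_of_nonneg (hp0 i)]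
      gcongr
      calc |∑ j, p j * (v i - v j)| ≤ ∑ j, |p j * (v i - v j)| := Finset.abs_sum_le_sum_abs _ _
        _ = ∑ j, p j * |v i - v j| := by
            refine Finset.sum_congr rfl fun j _ => ?_
            rw [abs_mul, abs_of_nonneg (hp0 j)]
    refine habs.trans ?_
    -- split off the i-th term (which is 0)
    have hsplit : ∑ j, p j * |v i - v j| = ∑ j ∈ Finset.univ.erase i, p j * |v i - v j| := by
      rw [← Finset.add_sum_erase _ _ (Finset.mem_univ i)]
      simp
    rw [hsplit]
    have hstep : ∑ j ∈ Finset.univ.erase i, p j * |v i - v j| ≤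
        (∑ j ∈ Finset.univ.erase i, p j) * (2 * M) := by
      rw [Finset.sum_mul]
      refine Finset.sum_le_sum fun j _ => ?_
      have : |v i - v j| ≤ 2 * M := by
        calc |v i - v j| ≤ |v i| + |v j| := abs_sub _ _
          _ ≤ M + M := add_le_add (hcoord i) (hcoord j)
          _ = 2 * M := by ring
      exact mul_le_mul_of_nonneg_left this (hp0 j)
    have herase : ∑ j ∈ Finset.univ.erase i, p j = 1 - p i := by
      have := Finset.add_sum_erase _ p (Finset.mem_univ i)
      rw [hpsum] at this
      linarith
    rw [herase] at hstep
    calc p i * ∑ j ∈ Finset.univ.erase i, p j * |v i - v j|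
        ≤ p i * ((1 - p i) * (2 * M)) :=
          mul_le_mul_of_nonneg_left hstep (hp0 i)
      _ ≤ M := softmax_aux_quad (hp0 i) hpi1 hM0
  -- mean value inequality on [0,1]
  have hmvt : ‖g 1 - g 0‖ ≤ M := by
    apply norm_image_sub_le_of_norm_deriv_le_segment_01' (f' := g')
    · intro x _
      exact (hderiv x).hasDerivWithinAt
    · intro x _
      simpa [Real.norm_eq_abs] using hbound x
  have hab0 : ∀ j, a j + 0 * v j = a j := fun j => by ring
  have hab1 : ∀ j, a j + 1 * v j = b j := fun j => by simp only [hv]; ring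
  have hg0 : g 0 = softmax a i := by
    show Real.exp (a i + 0 * v i) / (∑ j, Real.exp (a j + 0 * v j)) = _
    have hsum0 : (∑ j, Real.exp (a j + 0 * v j)) = ∑ j, Real.exp (a j) :=
      Finset.sum_congr rfl fun j _ => by rw [hab0 j]
    rw [softmax, hab0 i, hsum0]
  have hg1 : g 1 = softmax b i := by
    show Real.exp (a i + 1 * v i) / (∑ j, Real.exp (a j + 1 * v j)) = _
    have hsum1 : (∑ j, Real.exp (a j + 1 * v j)) = ∑ j, Real.exp (b j) :=
      Finset.sum_congr rfl fun j _ => by rw [hab1 j]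
    rw [softmax, hab1 i, hsum1]
  have h1 : |softmax a i - softmax b i| ≤ M := by
    rw [← hg0, ← hg1, abs_sub_comm]
    simpa [Real.norm_eq_abs] using hmvt
  have hsqrt : (1 : ℝ) ≤ Real.sqrt m := by
    rw [show (1 : ℝ) = Real.sqrt 1 by simp]
    exact Real.sqrt_le_sqrt (by exact_mod_cast hm)
  calc |softmax a i - softmax b i| ≤ M := h1
    _ = 1 * M := (one_mul M).symm
    _ ≤ Real.sqrt m * M := mul_le_mul_of_nonneg_right hsqrt hM0
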